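/- Let Λ = ⟨x, y | x³ = y³ = e⟩ be the free product ℤ/3 * ℤ/3. The assignment a ↦ xyx⁻¹, b ↦ x defines a homomorphism ρ from G = ⟨a,b | a³B²abA³b²AB⟩ (with A = a⁻¹, B = b⁻¹) to Λ (i.e., the relator maps to the identity), and ρ is surjective. -/

import Mathlib

namespace Stmt18

def a : FreeGroup (Fin 2) := FreeGroup.of 0
def b : FreeGroup (Fin 2) := FreeGroup.of 1

/-- relator a³B²abA³b²AB of π₁(m129), the Whitehead link complement -/
def m129Rels : Set (FreeGroup (Fin 2)) :=
  {a ^ 3 * b⁻¹ ^ 2 * a * b * a⁻¹ ^ 3 * b ^ 2 * a⁻¹ * b⁻¹}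

def x : FreeGroup (Fin 2) := FreeGroup.of 0
def y : FreeGroup (Fin 2) := FreeGroup.of 1

/-- relators of Λ₂(3,3,∞) = ⟨x,y | x³ = y³ = e⟩ ≅ ℤ/3 * ℤ/3 -/
def lambdaRels : Set (FreeGroup (Fin 2)) := {x ^ 3, y ^ 3}

noncomputable abbrev X : PresentedGroup lambdaRels := PresentedGroup.of 0
noncomputable abbrev Y : PresentedGroup lambdaRels := PresentedGroup.of 1

lemma X_cube : X ^ 3 = 1 := by
  have h : (x ^ 3) ∈ Subgroup.normalClosure lambdaRels :=
    Subgroup.subset_normalClosure (Or.inl rfl)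
  have h2 : X ^ 3 = (QuotientGroup.mk' (Subgroup.normalClosure lambdaRels)) (x ^ 3) := by
    rw [map_pow]; rfl
  refine h2.trans ?_
  exact (QuotientGroup.eq_one_iff _).2 h

lemma Y_cube : Y ^ 3 = 1 := by
  have h : (y ^ 3) ∈ Subgroup.normalClosure lambdaRels :=
    Subgroup.subset_normalClosure (Or.inr rfl)
  have h2 : Y ^ 3 = (QuotientGroup.mk' (Subgroup.normalClosure lambdaRels)) (y ^ 3) := by
    rw [map_pow]; rfl
  refine h2.trans ?_
  exact (QuotientGroup.eq_one_iff _).2 h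

noncomputable def f : Fin 2 → PresentedGroup lambdaRels := ![X * Y * X⁻¹, X]

lemma rel_maps_to_one : ∀ r ∈ m129Rels, FreeGroup.lift f r = 1 := by
  intro r hr
  simp only [m129Rels, Set.mem_singleton_iff] at hr
  subst hr
  have hX := X_cube
  have hY := Y_cube
  simp only [a, b, map_mul, map_pow, map_inv, FreeGroup.lift_apply_of, f]
  simp only [Matrix.cons_val_zero, Matrix.cons_val_one, Matrix.head_cons]
  simp only [inv_pow]
  rw [conj_pow, hY]
  calc X * 1 * X⁻¹ * (X ^ 2)⁻¹ * (X * Y * X⁻¹) * X * (X * 1 * X⁻¹)⁻¹ * X ^ 2 *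
        (X * Y * X⁻¹)⁻¹ * X⁻¹
      = X⁻¹ * (Y * X ^ 3 * Y⁻¹) * (X⁻¹) ^ 2 := by group
    _ = X⁻¹ * (Y * 1 * Y⁻¹) * (X⁻¹) ^ 2 := by rw [hX]
    _ = (X ^ 3)⁻¹ := by group
    _ = 1 := by rw [hX, inv_one]

/-- The assignment a ↦ xyx⁻¹, b ↦ x defines a surjective homomorphism
π₁(m129) → Λ₂(3,3,∞). -/
theorem m129_to_Lambda33inf :
    ∃ ρ : PresentedGroup m129Rels →* PresentedGroup lambdaRels,
      ρ (PresentedGroup.of 0) =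
        PresentedGroup.of 0 * PresentedGroup.of 1 * (PresentedGroup.of 0)⁻¹ ∧
      ρ (PresentedGroup.of 1) = PresentedGroup.of 0 ∧
      Function.Surjective ρ := by
  have hA : PresentedGroup.toGroup rel_maps_to_one (PresentedGroup.of 0) = X * Y * X⁻¹ := by
    simpa [f] using PresentedGroup.toGroup.of rel_maps_to_one (x := (0 : Fin 2))
  have hB : PresentedGroup.toGroup rel_maps_to_one (PresentedGroup.of 1) = X := by
    simpa [f] using PresentedGroup.toGroup.of rel_maps_to_one (x := (1 : Fin 2))
  refine ⟨PresentedGroup.toGroup rel_maps_to_one, hA, hB, ?_⟩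
  rw [← MonoidHom.range_eq_top, ← top_le_iff, ← PresentedGroup.closure_range_of lambdaRels,
    Subgroup.closure_le]
  rintro _ ⟨i, rfl⟩
  fin_cases i
  · exact ⟨PresentedGroup.of 1, hB⟩
  · refine ⟨(PresentedGroup.of 1)⁻¹ * PresentedGroup.of 0 * PresentedGroup.of 1, ?_⟩
    simp only [map_mul, map_inv, hA, hB]
    group
    rfl

end Stmt18
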